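/- Let c > 1/2 and δ > 0 be fixed. Let ℓ ≥ 4 and let ℓ_1, ℓ_2, ℓ_3, ℓ_4 be positive integers with ℓ_1+ℓ_2+ℓ_3+ℓ_4 = ℓ. Then there exist constants C > 0 and ρ ∈ (0,1), depending only on ℓ, c and δ, such that for all n ≥ 1, all vectors y_1,…,y_{ℓ−2} ∈ ℝ^n, and all signs ε_1,…,ε_{ℓ−2} ∈ {1,−1}: V_n^{−2ℓc} ∫_{ℝ^n}∫_{ℝ^n} f(x_1)·( ∏_{i=1}^{ℓ_1−1} f(ε_i x_1 + y_i) )·f(x_2)·( ∏_{i=ℓ_1}^{ℓ_1+ℓ_2−2} f(ε_i x_2 + y_i) )·( ∏_{i=ℓ_1+ℓ_2−1}^{ℓ_1+ℓ_2+ℓ_3−2} f(ε_i(x_1+x_2) + y_i) )·( ∏_{i=ℓ_1+ℓ_2+ℓ_3−1}^{ℓ−2} f(ε_i(x_1−x_2) + y_i) ) dx_1 dx_2 ≤ C·ρ^n, where f = f_{c,δ}. -/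

import Mathlib

open MeasureTheory Metric Set Module

/-- `V_n = π^{n/2} / Γ(n/2 + 1)`, the volume of the unit ball in `ℝⁿ`. -/
noncomputable def unitBallVol (n : ℕ) : ℝ :=
  Real.pi ^ ((n : ℝ) / 2) / Real.Gamma ((n : ℝ) / 2 + 1)

/-- `R_n(δ) = (δ / V_n)^{1/n}`, the radius of a ball of volume `δ` in `ℝⁿ`. -/
noncomputable def cutRadius (n : ℕ) (δ : ℝ) : ℝ :=
  (δ / unitBallVol n) ^ (1 / (n : ℝ))

/-- `f_{c,δ}(x) = |x|^{-2cn}` if `|x| > R_n(δ)`, and `0` otherwise. -/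
noncomputable def truncPower (n : ℕ) (c δ : ℝ) (x : EuclideanSpace ℝ (Fin n)) : ℝ :=
  if cutRadius n δ < ‖x‖ then ‖x‖ ^ (-(2 * c * (n : ℝ))) else 0

section Aux

variable {n : ℕ} {c δ : ℝ}

lemma unitBallVol_pos (n : ℕ) : 0 < unitBallVol n :=
  div_pos (Real.rpow_pos_of_pos Real.pi_pos _) (Real.Gamma_pos_of_pos (by positivity))

lemma cutRadius_pos (hδ : 0 < δ) (n : ℕ) : 0 < cutRadius n δ :=
  Real.rpow_pos_of_pos (div_pos hδ (unitBallVol_pos n)) _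

lemma truncPower_nonneg (x : EuclideanSpace ℝ (Fin n)) : 0 ≤ truncPower n c δ x := by
  unfold truncPower
  split
  · exact Real.rpow_nonneg (norm_nonneg x) _
  · exact le_refl 0

lemma truncPower_le (hδ : 0 < δ) (hc : 0 ≤ c) (x : EuclideanSpace ℝ (Fin n)) :
    truncPower n c δ x ≤ cutRadius n δ ^ (-(2 * c * (n : ℝ))) := by
  unfold truncPower
  split
  · next h =>
      exact Real.rpow_le_rpow_of_nonpos (cutRadius_pos hδ n) h.le
        (neg_nonpos.mpr (by positivity))
  · exact Real.rpow_nonneg (cutRadius_pos hδ n).le _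

lemma measurable_truncPower : Measurable (truncPower n c δ) := by
  unfold truncPower
  exact Measurable.ite (measurableSet_lt measurable_const measurable_norm)
    (by fun_prop) measurable_const

lemma integral_comp_sign_smul_add {e : ℝ} (he : e = 1 ∨ e = -1)
    (g : EuclideanSpace ℝ (Fin n) → ℝ) (v : EuclideanSpace ℝ (Fin n)) :
    ∫ x, g (e • x + v) = ∫ x, g x := by
  rcases he with rfl | rfl
  · simp only [one_smul]
    exact integral_add_right_eq_self g v
  · have h1 : ∫ x : EuclideanSpace ℝ (Fin n), g (-x + v)
        = ∫ x : EuclideanSpace ℝ (Fin n), g (x + v) :=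
      integral_neg_eq_self (fun x => g (x + v)) volume
    simp only [neg_smul, one_smul]
    rw [h1, integral_add_right_eq_self]

lemma integrable_comp_sign_smul_add {e : ℝ} (he : e = 1 ∨ e = -1)
    {g : EuclideanSpace ℝ (Fin n) → ℝ} (hg : Integrable g) (v : EuclideanSpace ℝ (Fin n)) :
    Integrable (fun x => g (e • x + v)) := by
  rcases he with rfl | rfl
  · simpa only [one_smul] using hg.comp_add_right v
  · have := (hg.comp_add_right v).comp_neg
    simpa only [neg_smul, one_smul] using this

lemma integral_comp_smul_add (g : EuclideanSpace ℝ (Fin n) → ℝ) (a : ℝ)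
    (v : EuclideanSpace ℝ (Fin n)) :
    ∫ x, g (a • x + v) = |(a ^ n : ℝ)⁻¹| * ∫ x, g x := by
  have h := MeasureTheory.Measure.integral_comp_smul
    (volume : Measure (EuclideanSpace ℝ (Fin n))) (fun w => g (w + v)) a
  rw [integral_add_right_eq_self g v] at h
  simpa [finrank_euclideanSpace_fin, smul_eq_mul] using h

lemma integrable_truncPower (hn : 1 ≤ n) (hc : 1 / 2 < c) (hδ : 0 < δ) :
    Integrable (truncPower n c δ) := by
  have hR : 0 < cutRadius n δ := cutRadius_pos hδ n
  have hn1 : (1 : ℝ) ≤ (n : ℝ) := by exact_mod_cast hn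
  have hnr : (finrank ℝ (EuclideanSpace ℝ (Fin n)) : ℝ) < 2 * c * n := by
    rw [finrank_euclideanSpace_fin]
    nlinarith
  have ha : (0 : ℝ) ≤ 2 * c * n := by nlinarith
  have hint : Integrable (fun x : EuclideanSpace ℝ (Fin n) =>
      (1 + (cutRadius n δ)⁻¹) ^ (2 * c * (n : ℝ)) * (1 + ‖x‖) ^ (-(2 * c * (n : ℝ)))) :=
    (integrable_one_add_norm hnr).const_mul _
  refine hint.mono' measurable_truncPower.aestronglyMeasurable (ae_of_all _ fun x => ?_)
  rw [Real.norm_of_nonneg (truncPower_nonneg x)]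
  unfold truncPower
  split
  · next h =>
      have hx : 0 < ‖x‖ := hR.trans h
      have h1x : 0 < 1 + ‖x‖ := by positivity
      rw [Real.rpow_neg (norm_nonneg x), Real.rpow_neg h1x.le, ← Real.inv_rpow (norm_nonneg x),
        ← Real.inv_rpow h1x.le, ← Real.mul_rpow (by positivity) (by positivity)]
      refine Real.rpow_le_rpow (by positivity) ?_ ha
      rw [← div_eq_mul_inv, inv_eq_one_div, div_le_div_iff₀ hx h1x]
      have h3 : 1 ≤ (cutRadius n δ)⁻¹ * ‖x‖ := by
        rw [← inv_mul_cancel₀ hR.ne']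
        exact mul_le_mul_of_nonneg_left h.le (by positivity)
      nlinarith
  · positivity

lemma toReal_volume_unitBall (hn : 1 ≤ n) :
    (volume (ball (0 : EuclideanSpace ℝ (Fin n)) 1)).toReal = unitBallVol n := by
  haveI : Nonempty (Fin n) := ⟨⟨0, hn⟩⟩
  rw [EuclideanSpace.volume_ball]
  have hG : 0 < Real.Gamma ((n : ℝ) / 2 + 1) := Real.Gamma_pos_of_pos (by positivity)
  rw [Fintype.card_fin]
  have hsq : Real.sqrt Real.pi ^ n = Real.pi ^ ((n : ℝ) / 2) := by
    rw [Real.sqrt_eq_rpow, ← Real.rpow_natCast (Real.pi ^ ((1:ℝ)/2)) n,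
      ← Real.rpow_mul Real.pi_pos.le]
    congr 1
    ring
  simp only [ENNReal.ofReal_one, one_pow, one_mul]
  rw [ENNReal.toReal_ofReal (by positivity), hsq, unitBallVol]

lemma integral_truncPower (hn : 1 ≤ n) (hc : 1 / 2 < c) (hδ : 0 < δ) :
    ∫ x : EuclideanSpace ℝ (Fin n), truncPower n c δ x
      = unitBallVol n * cutRadius n δ ^ ((n : ℝ) - 2 * c * n) / (2 * c - 1) := by
  haveI : Nonempty (Fin n) := ⟨⟨0, hn⟩⟩
  haveI : Nontrivial (EuclideanSpace ℝ (Fin n)) := inferInstance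
  have hR : 0 < cutRadius n δ := cutRadius_pos hδ n
  have hn1 : (1 : ℝ) ≤ (n : ℝ) := by exact_mod_cast hn
  have key := integral_fun_norm_addHaar (volume : Measure (EuclideanSpace ℝ (Fin n)))
    (fun r : ℝ => if cutRadius n δ < r then r ^ (-(2 * c * (n : ℝ))) else 0)
  have hLHS : (∫ x : EuclideanSpace ℝ (Fin n), truncPower n c δ x)
      = ∫ x : EuclideanSpace ℝ (Fin n),
        (fun r : ℝ => if cutRadius n δ < r then r ^ (-(2 * c * (n : ℝ))) else 0) ‖x‖ := rfl
  rw [hLHS, key, finrank_euclideanSpace_fin]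
  have hinner : (∫ y in Ioi (0:ℝ), y ^ (n - 1) •
      (if cutRadius n δ < y then y ^ (-(2 * c * (n : ℝ))) else 0))
      = ∫ y in Ioi (cutRadius n δ), y ^ ((n : ℝ) - 1 + -(2 * c * n)) := by
    rw [setIntegral_congr_fun measurableSet_Ioi
      (g := (Ioi (cutRadius n δ)).indicator (fun y => y ^ ((n : ℝ) - 1 + -(2 * c * n))))
      (fun y hy => ?_), setIntegral_indicator measurableSet_Ioi,
      Set.Ioi_inter_Ioi, max_eq_right hR.le]
    · rw [indicator_apply]
      by_cases h : cutRadius n δ < y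
      · have hy0 : (0:ℝ) < y := hy
        rw [if_pos h, if_pos (by exact h), smul_eq_mul,
          ← Real.rpow_natCast y (n - 1), ← Real.rpow_add hy0]
        congr 1
        have hcast : ((n - 1 : ℕ) : ℝ) = (n : ℝ) - 1 := by
          rw [Nat.cast_sub hn]; norm_num
        rw [hcast]
      · rw [if_neg h, if_neg (by exact h), smul_eq_mul, mul_zero]
  rw [hinner]
  have hb : (n : ℝ) - 1 + -(2 * c * n) < -1 := by nlinarith
  rw [integral_Ioi_rpow_of_lt hb hR, measureReal_def, toReal_volume_unitBall hn]
  have he : (n : ℝ) - 1 + -(2 * c * n) + 1 = (n : ℝ) - 2 * c * n := by ring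
  rw [he]
  have hd : (n : ℝ) - 2 * c * n ≠ 0 := by nlinarith
  have h2c : (2 : ℝ) * c - 1 ≠ 0 := by nlinarith
  have hn0 : (n : ℝ) ≠ 0 := by positivity
  rw [nsmul_eq_mul, smul_eq_mul]
  field_simp
  have h2c' : (1 - c * 2 : ℝ) ≠ 0 := by intro h; apply h2c; linarith
  linear_combination unitBallVol n * mul_inv_cancel₀ h2c'
end Aux

lemma final_arith {n : ℕ} {c δ : ℝ} (hn : 1 ≤ n) (hc : 1 / 2 < c) (hδ : 0 < δ)
    (ℓ : ℕ) (hℓ : 4 ≤ ℓ) :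
    unitBallVol n ^ (-(2 * (ℓ:ℝ) * c)) * ((cutRadius n δ ^ (-(2 * c * (n:ℝ)))) ^ (ℓ - 2) *
      ((2:ℝ)⁻¹ ^ n * ((unitBallVol n * cutRadius n δ ^ ((n:ℝ) - 2 * c * n) / (2 * c - 1)) *
        (unitBallVol n * cutRadius n δ ^ ((n:ℝ) - 2 * c * n) / (2 * c - 1)))))
      = δ ^ ((2:ℝ) - 2 * c * ℓ) / (2 * c - 1) ^ 2 * (1 / 2 : ℝ) ^ n := by
  have hV : 0 < unitBallVol n := unitBallVol_pos n
  have hR : 0 < cutRadius n δ := cutRadius_pos hδ n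
  have hn0 : (n:ℝ) ≠ 0 := Nat.cast_ne_zero.mpr (by omega)
  have hW : (0:ℝ) < δ / unitBallVol n := div_pos hδ hV
  have hRW : ∀ e : ℝ, cutRadius n δ ^ e = (δ / unitBallVol n) ^ (e / (n:ℝ)) := by
    intro e
    rw [show cutRadius n δ = (δ / unitBallVol n) ^ (1 / (n:ℝ)) from rfl,
      ← Real.rpow_mul hW.le]
    congr 1
    field_simp
  have hcast : ((ℓ - 2 : ℕ) : ℝ) = (ℓ:ℝ) - 2 := by
    rw [Nat.cast_sub (by omega)]; norm_num
  have hBpow : (cutRadius n δ ^ (-(2 * c * (n:ℝ)))) ^ (ℓ - 2)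
      = (δ / unitBallVol n) ^ ((-(2*c)) * ((ℓ:ℝ) - 2)) := by
    rw [← Real.rpow_natCast (cutRadius n δ ^ (-(2 * c * (n:ℝ)))) (ℓ - 2),
      ← Real.rpow_mul hR.le, hcast, hRW]
    congr 1
    field_simp
  have hRe : cutRadius n δ ^ ((n:ℝ) - 2 * c * n) = (δ / unitBallVol n) ^ (1 - 2*c) := by
    rw [hRW]
    congr 1
    field_simp
  rw [hBpow, hRe]
  calc unitBallVol n ^ (-(2 * (ℓ:ℝ) * c)) * ((δ / unitBallVol n) ^ ((-(2*c)) * ((ℓ:ℝ) - 2)) *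
        ((2:ℝ)⁻¹ ^ n * ((unitBallVol n * (δ / unitBallVol n) ^ (1 - 2*c) / (2 * c - 1)) *
          (unitBallVol n * (δ / unitBallVol n) ^ (1 - 2*c) / (2 * c - 1)))))
      = ((2:ℝ)⁻¹ ^ n / (2 * c - 1) ^ 2) *
          ((unitBallVol n ^ (-(2 * (ℓ:ℝ) * c)) * unitBallVol n ^ (1:ℝ) * unitBallVol n ^ (1:ℝ)) *
           ((δ / unitBallVol n) ^ ((-(2*c)) * ((ℓ:ℝ) - 2)) *
            ((δ / unitBallVol n) ^ (1 - 2*c) * (δ / unitBallVol n) ^ (1 - 2*c)))) := by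
        have hK : (2*c-1 : ℝ) ≠ 0 := by nlinarith
        rw [Real.rpow_one]
        field_simp
    _ = ((2:ℝ)⁻¹ ^ n / (2 * c - 1) ^ 2) *
          (unitBallVol n ^ (-(2 * (ℓ:ℝ) * c) + 1 + 1) *
           (δ / unitBallVol n) ^ ((-(2*c)) * ((ℓ:ℝ) - 2) + ((1 - 2*c) + (1 - 2*c)))) := by
        rw [← Real.rpow_add hV, ← Real.rpow_add hV, ← Real.rpow_add hW, ← Real.rpow_add hW]
    _ = ((2:ℝ)⁻¹ ^ n / (2 * c - 1) ^ 2) *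
          (unitBallVol n ^ (-(2 * (ℓ:ℝ) * c) + 1 + 1) *
           (δ ^ ((2:ℝ) - 2 * c * ℓ) / unitBallVol n ^ ((2:ℝ) - 2 * c * ℓ))) := by
        rw [show (-(2*c)) * ((ℓ:ℝ) - 2) + ((1 - 2*c) + (1 - 2*c)) = (2:ℝ) - 2 * c * ℓ
          from by ring, Real.div_rpow hδ.le hV.le]
    _ = ((2:ℝ)⁻¹ ^ n / (2 * c - 1) ^ 2) *
          (unitBallVol n ^ (-(2 * (ℓ:ℝ) * c) + 1 + 1 - ((2:ℝ) - 2 * c * ℓ)) *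
            δ ^ ((2:ℝ) - 2 * c * ℓ)) := by
        rw [Real.rpow_sub hV (-(2 * (ℓ:ℝ) * c) + 1 + 1) ((2:ℝ) - 2 * c * ℓ)]
        ring
    _ = δ ^ ((2:ℝ) - 2 * c * ℓ) / (2 * c - 1) ^ 2 * (1 / 2 : ℝ) ^ n := by
        rw [show -(2 * (ℓ:ℝ) * c) + 1 + 1 - ((2:ℝ) - 2 * c * ℓ) = 0 from by ring,
          Real.rpow_zero, one_div]
        ring

/-- for positive integers `ℓ_1 + ℓ_2 + ℓ_3 + ℓ_4 = ℓ ≥ 4`, the normalized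
shifted double integral
`V_n^{-2ℓc} ∫∫ f(x₁) ∏_{i=1}^{ℓ₁-1} f(ε_i x₁ + y_i) · f(x₂) ∏_{i=ℓ₁}^{ℓ₁+ℓ₂-2} f(ε_i x₂ + y_i)
 · ∏_{i=ℓ₁+ℓ₂-1}^{ℓ₁+ℓ₂+ℓ₃-2} f(ε_i(x₁+x₂) + y_i) · ∏_{i=ℓ₁+ℓ₂+ℓ₃-1}^{ℓ-2} f(ε_i(x₁-x₂) + y_i)`
is bounded by `C ρⁿ`, uniformly in the shifts `y_i` and signs `ε_i`. -/
theorem shifted_four_fold_integral_bound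
    (c δ : ℝ) (hc : 1 / 2 < c) (hδ : 0 < δ)
    (ℓ ℓ₁ ℓ₂ ℓ₃ ℓ₄ : ℕ) (hℓ : 4 ≤ ℓ)
    (h₁ : 0 < ℓ₁) (h₂ : 0 < ℓ₂) (h₃ : 0 < ℓ₃) (h₄ : 0 < ℓ₄)
    (hsum : ℓ₁ + ℓ₂ + ℓ₃ + ℓ₄ = ℓ) :
    ∃ C ρ : ℝ, 0 < C ∧ ρ ∈ Set.Ioo (0 : ℝ) 1 ∧
      ∀ n : ℕ, 1 ≤ n →
      ∀ y : ℕ → EuclideanSpace ℝ (Fin n),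
      ∀ ε : ℕ → ℝ, (∀ i, ε i = 1 ∨ ε i = -1) →
        unitBallVol n ^ (-(2 * (ℓ : ℝ) * c)) *
          ∫ x₁ : EuclideanSpace ℝ (Fin n), ∫ x₂ : EuclideanSpace ℝ (Fin n),
            truncPower n c δ x₁ *
              (∏ i ∈ Finset.Ico 1 ℓ₁, truncPower n c δ (ε i • x₁ + y i)) *
            truncPower n c δ x₂ *
              (∏ i ∈ Finset.Ico ℓ₁ (ℓ₁ + ℓ₂ - 1), truncPower n c δ (ε i • x₂ + y i)) *
            (∏ i ∈ Finset.Ico (ℓ₁ + ℓ₂ - 1) (ℓ₁ + ℓ₂ + ℓ₃ - 1),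
              truncPower n c δ (ε i • (x₁ + x₂) + y i)) *
            (∏ i ∈ Finset.Ico (ℓ₁ + ℓ₂ + ℓ₃ - 1) (ℓ - 1),
              truncPower n c δ (ε i • (x₁ - x₂) + y i))
        ≤ C * ρ ^ n := by
  have h2c : (0:ℝ) < 2 * c - 1 := by linarith
  refine ⟨δ ^ ((2:ℝ) - 2 * c * ℓ) / (2 * c - 1) ^ 2, 1 / 2,
    div_pos (Real.rpow_pos_of_pos hδ _) (by positivity), ⟨by norm_num, by norm_num⟩, ?_⟩
  intro n hn y ε hε
  set V := unitBallVol n with hVdef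
  set R := cutRadius n δ with hRdef
  have hV : 0 < V := unitBallVol_pos n
  have hR : 0 < R := cutRadius_pos hδ n
  set f := truncPower n c δ with hfdef
  have hf_nn : ∀ x, 0 ≤ f x := truncPower_nonneg
  set B : ℝ := R ^ (-(2 * c * (n:ℝ))) with hBdef
  have hB : 0 < B := Real.rpow_pos_of_pos hR _
  have hf_le : ∀ x, f x ≤ B := truncPower_le hδ (by linarith)
  have hf_int : Integrable f := integrable_truncPower hn hc hδ
  have hf_meas : Measurable f := measurable_truncPower
  have hεa := hε (ℓ₁ + ℓ₂ - 1)
  have hεb := hε (ℓ₁ + ℓ₂ + ℓ₃ - 1)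
  set εa := ε (ℓ₁ + ℓ₂ - 1) with hεadef
  set εb := ε (ℓ₁ + ℓ₂ + ℓ₃ - 1) with hεbdef
  set σ : ℝ := -(εa * εb) with hσdef
  have hσ : σ = 1 ∨ σ = -1 := by
    rcases hεa with h | h <;> rcases hεb with h' | h' <;> rw [hσdef, h, h'] <;> norm_num
  have hnσ : -σ = 1 ∨ -σ = -1 := by rcases hσ with h | h <;> rw [h] <;> norm_num
  have hσσ : σ * σ = 1 := by rcases hσ with h | h <;> rw [h] <;> norm_num
  set g : EuclideanSpace ℝ (Fin n) → ℝ := fun s => f ((-σ) • s) with hgdef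
  have hgr : ∀ s, g s = f ((-σ) • s) := fun s => rfl
  have hg_int : Integrable g := by
    have h0 := integrable_comp_sign_smul_add hnσ hf_int 0
    rw [hgdef]
    simpa using h0
  set D : EuclideanSpace ℝ (Fin n) → ℝ := fun t => ∫ w, f w * f (σ • w + t) with hDdef
  have hDr : ∀ t, D t = ∫ w, f w * f (σ • w + t) := fun t => rfl
  have hD_conv : D = convolution g f (ContinuousLinearMap.mul ℝ ℝ) volume := by
    funext t
    rw [hDr t, convolution_def]
    simp only [ContinuousLinearMap.mul_apply']
    have h1 := integral_comp_sign_smul_add hnσ (fun s => g s * f (t - s)) 0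
    have h2 : (fun x : EuclideanSpace ℝ (Fin n) =>
        (fun s => g s * f (t - s)) ((-σ) • x + 0)) = fun w => f w * f (σ • w + t) := by
      funext w
      show g ((-σ) • w + 0) * f (t - ((-σ) • w + 0)) = f w * f (σ • w + t)
      rw [add_zero, hgr, smul_smul, neg_mul_neg, hσσ, one_smul, neg_smul, sub_neg_eq_add,
        add_comm t (σ • w)]
    rw [← h1, h2]
  have hDint : Integrable D := by
    rw [hD_conv]
    exact Integrable.integrable_convolution (ContinuousLinearMap.mul ℝ ℝ) hg_int hf_int
  have hIf : ∫ x, f x = V * R ^ ((n:ℝ) - 2 * c * n) / (2 * c - 1) := integral_truncPower hn hc hδ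
  have hIg : ∫ x, g x = ∫ x, f x := by
    have h0 := integral_comp_sign_smul_add hnσ f 0
    simp only [add_zero] at h0
    rw [hgdef]
    exact h0
  have hID : ∫ t, D t = (∫ x, f x) * (∫ x, f x) := by
    rw [hD_conv, integral_convolution (ContinuousLinearMap.mul ℝ ℝ) hg_int hf_int,
      ContinuousLinearMap.mul_apply', hIg]
  -- vector identities
  have hua : ∀ x₁ x₂ : EuclideanSpace ℝ (Fin n), ∀ i,
      ε i • (x₁ + x₂) + y i = ε i • x₂ + (ε i • x₁ + y i) := by
    intro x₁ x₂ i; module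
  have hub : ∀ x₁ x₂ : EuclideanSpace ℝ (Fin n), ∀ i,
      ε i • (x₁ - x₂) + y i = (-ε i) • x₂ + (ε i • x₁ + y i) := by
    intro x₁ x₂ i; module
  have hvec : ∀ x₁ x₂ : EuclideanSpace ℝ (Fin n),
      σ • (εa • x₂ + (εa • x₁ + y (ℓ₁ + ℓ₂ - 1))) +
        ((2 * εb) • x₁ + ((εa * εb) • y (ℓ₁ + ℓ₂ - 1) + y (ℓ₁ + ℓ₂ + ℓ₃ - 1)))
      = (-εb) • x₂ + (εb • x₁ + y (ℓ₁ + ℓ₂ + ℓ₃ - 1)) := by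
    intro x₁ x₂
    rw [hσdef]
    rcases hεa with h | h <;> rcases hεb with h' | h' <;> rw [h, h'] <;> module
  set F : EuclideanSpace ℝ (Fin n) → EuclideanSpace ℝ (Fin n) → ℝ := fun x₁ x₂ =>
    f x₁ * (∏ i ∈ Finset.Ico 1 ℓ₁, f (ε i • x₁ + y i)) *
    f x₂ * (∏ i ∈ Finset.Ico ℓ₁ (ℓ₁ + ℓ₂ - 1), f (ε i • x₂ + y i)) *
    (∏ i ∈ Finset.Ico (ℓ₁ + ℓ₂ - 1) (ℓ₁ + ℓ₂ + ℓ₃ - 1), f (ε i • (x₁ + x₂) + y i)) *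
    (∏ i ∈ Finset.Ico (ℓ₁ + ℓ₂ + ℓ₃ - 1) (ℓ - 1), f (ε i • (x₁ - x₂) + y i)) with hFdef
  have hPle : ∀ (s : Finset ℕ) (u : ℕ → EuclideanSpace ℝ (Fin n)),
      (∏ i ∈ s, f (u i)) ≤ B ^ s.card := by
    intro s u
    calc (∏ i ∈ s, f (u i)) ≤ ∏ _i ∈ s, B :=
          Finset.prod_le_prod (fun i _ => hf_nn _) (fun i _ => hf_le _)
      _ = B ^ s.card := Finset.prod_const B
  have hPnn : ∀ (s : Finset ℕ) (u : ℕ → EuclideanSpace ℝ (Fin n)),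
      0 ≤ ∏ i ∈ s, f (u i) := fun s u => Finset.prod_nonneg fun i _ => hf_nn _
  have hFnn : ∀ x₁ x₂, 0 ≤ F x₁ x₂ := by
    intro x₁ x₂
    exact mul_nonneg (mul_nonneg (mul_nonneg (mul_nonneg (mul_nonneg
      (hf_nn _) (hPnn _ _)) (hf_nn _)) (hPnn _ _)) (hPnn _ _)) (hPnn _ _)
  have ha_mem : ℓ₁ + ℓ₂ - 1 ∈ Finset.Ico (ℓ₁ + ℓ₂ - 1) (ℓ₁ + ℓ₂ + ℓ₃ - 1) :=
    Finset.mem_Ico.mpr ⟨le_rfl, by omega⟩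
  have hb_mem : ℓ₁ + ℓ₂ + ℓ₃ - 1 ∈ Finset.Ico (ℓ₁ + ℓ₂ + ℓ₃ - 1) (ℓ - 1) :=
    Finset.mem_Ico.mpr ⟨le_rfl, by omega⟩
  have hptw : ∀ x₁ x₂, F x₁ x₂ ≤ B ^ (ℓ - 2) *
      (f (εa • x₂ + (εa • x₁ + y (ℓ₁ + ℓ₂ - 1))) *
       f ((-εb) • x₂ + (εb • x₁ + y (ℓ₁ + ℓ₂ + ℓ₃ - 1)))) := by
    intro x₁ x₂
    have hP1 : (∏ i ∈ Finset.Ico 1 ℓ₁, f (ε i • x₁ + y i)) ≤ B ^ (ℓ₁ - 1) := by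
      have := hPle (Finset.Ico 1 ℓ₁) (fun i => ε i • x₁ + y i)
      rwa [Nat.card_Ico] at this
    have hP2 : (∏ i ∈ Finset.Ico ℓ₁ (ℓ₁ + ℓ₂ - 1), f (ε i • x₂ + y i)) ≤ B ^ (ℓ₂ - 1) := by
      have := hPle (Finset.Ico ℓ₁ (ℓ₁ + ℓ₂ - 1)) (fun i => ε i • x₂ + y i)
      rwa [Nat.card_Ico, show ℓ₁ + ℓ₂ - 1 - ℓ₁ = ℓ₂ - 1 from by omega] at this
    have h3 : (∏ i ∈ Finset.Ico (ℓ₁ + ℓ₂ - 1) (ℓ₁ + ℓ₂ + ℓ₃ - 1), f (ε i • (x₁ + x₂) + y i))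
        ≤ f (εa • (x₁ + x₂) + y (ℓ₁ + ℓ₂ - 1)) * B ^ (ℓ₃ - 1) := by
      rw [← Finset.mul_prod_erase _ (fun i => f (ε i • (x₁ + x₂) + y i)) ha_mem]
      refine mul_le_mul_of_nonneg_left ?_ (hf_nn _)
      have hcard : ((Finset.Ico (ℓ₁ + ℓ₂ - 1) (ℓ₁ + ℓ₂ + ℓ₃ - 1)).erase (ℓ₁ + ℓ₂ - 1)).card
          = ℓ₃ - 1 := by
        rw [Finset.card_erase_of_mem ha_mem, Nat.card_Ico]; omega
      calc (∏ i ∈ (Finset.Ico (ℓ₁ + ℓ₂ - 1) (ℓ₁ + ℓ₂ + ℓ₃ - 1)).erase (ℓ₁ + ℓ₂ - 1),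
              f (ε i • (x₁ + x₂) + y i))
          ≤ B ^ ((Finset.Ico (ℓ₁ + ℓ₂ - 1) (ℓ₁ + ℓ₂ + ℓ₃ - 1)).erase (ℓ₁ + ℓ₂ - 1)).card :=
            hPle _ _
        _ = B ^ (ℓ₃ - 1) := by rw [hcard]
    have h4 : (∏ i ∈ Finset.Ico (ℓ₁ + ℓ₂ + ℓ₃ - 1) (ℓ - 1), f (ε i • (x₁ - x₂) + y i))
        ≤ f (εb • (x₁ - x₂) + y (ℓ₁ + ℓ₂ + ℓ₃ - 1)) * B ^ (ℓ₄ - 1) := by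
      rw [← Finset.mul_prod_erase _ (fun i => f (ε i • (x₁ - x₂) + y i)) hb_mem]
      refine mul_le_mul_of_nonneg_left ?_ (hf_nn _)
      have hcard : ((Finset.Ico (ℓ₁ + ℓ₂ + ℓ₃ - 1) (ℓ - 1)).erase (ℓ₁ + ℓ₂ + ℓ₃ - 1)).card
          = ℓ₄ - 1 := by
        rw [Finset.card_erase_of_mem hb_mem, Nat.card_Ico]; omega
      calc (∏ i ∈ (Finset.Ico (ℓ₁ + ℓ₂ + ℓ₃ - 1) (ℓ - 1)).erase (ℓ₁ + ℓ₂ + ℓ₃ - 1),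
              f (ε i • (x₁ - x₂) + y i))
          ≤ B ^ ((Finset.Ico (ℓ₁ + ℓ₂ + ℓ₃ - 1) (ℓ - 1)).erase (ℓ₁ + ℓ₂ + ℓ₃ - 1)).card :=
            hPle _ _
        _ = B ^ (ℓ₄ - 1) := by rw [hcard]
    have m1 : f x₁ * (∏ i ∈ Finset.Ico 1 ℓ₁, f (ε i • x₁ + y i)) ≤ B * B ^ (ℓ₁ - 1) :=
      mul_le_mul (hf_le x₁) hP1 (hPnn _ _) hB.le
    have m2 := mul_le_mul m1 (hf_le x₂) (hf_nn x₂) (by positivity)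
    have m3 := mul_le_mul m2 hP2 (hPnn _ _) (by positivity)
    have m4 := mul_le_mul m3 h3 (hPnn _ _) (by positivity)
    have m5 := mul_le_mul m4 h4 (hPnn _ _)
      (mul_nonneg (by positivity) (mul_nonneg (hf_nn _) (by positivity)))
    calc F x₁ x₂ ≤ B * B ^ (ℓ₁ - 1) * B * B ^ (ℓ₂ - 1) *
          (f (εa • (x₁ + x₂) + y (ℓ₁ + ℓ₂ - 1)) * B ^ (ℓ₃ - 1)) *
          (f (εb • (x₁ - x₂) + y (ℓ₁ + ℓ₂ + ℓ₃ - 1)) * B ^ (ℓ₄ - 1)) := m5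
      _ = B ^ (ℓ - 2) * (f (εa • (x₁ + x₂) + y (ℓ₁ + ℓ₂ - 1)) *
            f (εb • (x₁ - x₂) + y (ℓ₁ + ℓ₂ + ℓ₃ - 1))) := by
        rw [show ℓ - 2 = 1 + (ℓ₁ - 1) + 1 + (ℓ₂ - 1) + (ℓ₃ - 1) + (ℓ₄ - 1) from by omega]
        ring
      _ = B ^ (ℓ - 2) * (f (εa • x₂ + (εa • x₁ + y (ℓ₁ + ℓ₂ - 1))) *
            f ((-εb) • x₂ + (εb • x₁ + y (ℓ₁ + ℓ₂ + ℓ₃ - 1)))) := by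
        rw [hua x₁ x₂, hub x₁ x₂]
  have hnb : -εb = 1 ∨ -εb = -1 := by rcases hεb with h | h <;> rw [h] <;> norm_num
  have hGint : ∀ x₁ : EuclideanSpace ℝ (Fin n), Integrable (fun x₂ => B ^ (ℓ - 2) *
      (f (εa • x₂ + (εa • x₁ + y (ℓ₁ + ℓ₂ - 1))) *
       f ((-εb) • x₂ + (εb • x₁ + y (ℓ₁ + ℓ₂ + ℓ₃ - 1))))) := by
    intro x₁
    have h2 : Integrable (fun x₂ => f ((-εb) • x₂ + (εb • x₁ + y (ℓ₁ + ℓ₂ + ℓ₃ - 1)))) :=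
      integrable_comp_sign_smul_add hnb hf_int _
    have h3 : Integrable (fun x₂ => f (εa • x₂ + (εa • x₁ + y (ℓ₁ + ℓ₂ - 1))) *
        f ((-εb) • x₂ + (εb • x₁ + y (ℓ₁ + ℓ₂ + ℓ₃ - 1)))) :=
      h2.bdd_mul ((hf_meas.comp ((measurable_id.const_smul εa).add_const _)).aestronglyMeasurable)
        (ae_of_all _ fun x => by rw [Real.norm_of_nonneg (hf_nn _)]; exact hf_le _)
    exact h3.const_mul _
  have hinner_eq : ∀ x₁ : EuclideanSpace ℝ (Fin n),
      (∫ x₂, f (εa • x₂ + (εa • x₁ + y (ℓ₁ + ℓ₂ - 1))) *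
        f ((-εb) • x₂ + (εb • x₁ + y (ℓ₁ + ℓ₂ + ℓ₃ - 1))))
      = D ((2 * εb) • x₁ + ((εa * εb) • y (ℓ₁ + ℓ₂ - 1) + y (ℓ₁ + ℓ₂ + ℓ₃ - 1))) := by
    intro x₁
    have h1 := integral_comp_sign_smul_add hεa (fun w => f w * f (σ • w +
      ((2 * εb) • x₁ + ((εa * εb) • y (ℓ₁ + ℓ₂ - 1) + y (ℓ₁ + ℓ₂ + ℓ₃ - 1)))))
      (εa • x₁ + y (ℓ₁ + ℓ₂ - 1))
    have h2 : (fun x₂ : EuclideanSpace ℝ (Fin n) => (fun w => f w * f (σ • w +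
        ((2 * εb) • x₁ + ((εa * εb) • y (ℓ₁ + ℓ₂ - 1) + y (ℓ₁ + ℓ₂ + ℓ₃ - 1)))))
          (εa • x₂ + (εa • x₁ + y (ℓ₁ + ℓ₂ - 1))))
        = fun x₂ => f (εa • x₂ + (εa • x₁ + y (ℓ₁ + ℓ₂ - 1))) *
          f ((-εb) • x₂ + (εb • x₁ + y (ℓ₁ + ℓ₂ + ℓ₃ - 1))) := by
      funext x₂
      show f _ * f (σ • (εa • x₂ + (εa • x₁ + y (ℓ₁ + ℓ₂ - 1))) + _) = _
      rw [hvec x₁ x₂]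
    rw [← h2, h1]
  have hcore : ∀ x₁ : EuclideanSpace ℝ (Fin n), (∫ x₂, F x₁ x₂) ≤ B ^ (ℓ - 2) *
      D ((2 * εb) • x₁ + ((εa * εb) • y (ℓ₁ + ℓ₂ - 1) + y (ℓ₁ + ℓ₂ + ℓ₃ - 1))) := by
    intro x₁
    calc (∫ x₂, F x₁ x₂) ≤ ∫ x₂, B ^ (ℓ - 2) *
          (f (εa • x₂ + (εa • x₁ + y (ℓ₁ + ℓ₂ - 1))) *
           f ((-εb) • x₂ + (εb • x₁ + y (ℓ₁ + ℓ₂ + ℓ₃ - 1)))) :=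
        integral_mono_of_nonneg (ae_of_all _ fun x₂ => hFnn x₁ x₂) (hGint x₁)
          (ae_of_all _ fun x₂ => hptw x₁ x₂)
      _ = B ^ (ℓ - 2) * ∫ x₂, f (εa • x₂ + (εa • x₁ + y (ℓ₁ + ℓ₂ - 1))) *
            f ((-εb) • x₂ + (εb • x₁ + y (ℓ₁ + ℓ₂ + ℓ₃ - 1))) := integral_const_mul _ _
      _ = B ^ (ℓ - 2) * D ((2 * εb) • x₁ +
            ((εa * εb) • y (ℓ₁ + ℓ₂ - 1) + y (ℓ₁ + ℓ₂ + ℓ₃ - 1))) := by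
        rw [hinner_eq x₁]
  have h2εb : (2 * εb : ℝ) ≠ 0 := by rcases hεb with h | h <;> rw [h] <;> norm_num
  have houter_int : Integrable (fun x₁ : EuclideanSpace ℝ (Fin n) => B ^ (ℓ - 2) *
      D ((2 * εb) • x₁ + ((εa * εb) • y (ℓ₁ + ℓ₂ - 1) + y (ℓ₁ + ℓ₂ + ℓ₃ - 1)))) := by
    have h1 : Integrable (fun w : EuclideanSpace ℝ (Fin n) =>
        D (w + ((εa * εb) • y (ℓ₁ + ℓ₂ - 1) + y (ℓ₁ + ℓ₂ + ℓ₃ - 1)))) :=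
      hDint.comp_add_right _
    have h2 := (MeasureTheory.integrable_comp_smul_iff volume
      (fun w : EuclideanSpace ℝ (Fin n) =>
        D (w + ((εa * εb) • y (ℓ₁ + ℓ₂ - 1) + y (ℓ₁ + ℓ₂ + ℓ₃ - 1)))) h2εb).mpr h1
    exact h2.const_mul _
  have habs : |((2 * εb) ^ n : ℝ)⁻¹| = (2:ℝ)⁻¹ ^ n := by
    rcases hεb with h | h <;> rw [h] <;> rw [abs_inv, abs_pow, inv_pow] <;> norm_num
  have hmain : (∫ x₁, ∫ x₂, F x₁ x₂) ≤ B ^ (ℓ - 2) *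
      ((2:ℝ)⁻¹ ^ n * ((∫ x, f x) * (∫ x, f x))) := by
    have h1 : (∫ x₁, ∫ x₂, F x₁ x₂) ≤ ∫ x₁, B ^ (ℓ - 2) *
        D ((2 * εb) • x₁ + ((εa * εb) • y (ℓ₁ + ℓ₂ - 1) + y (ℓ₁ + ℓ₂ + ℓ₃ - 1))) :=
      integral_mono_of_nonneg
        (ae_of_all _ fun x₁ => integral_nonneg fun x₂ => hFnn x₁ x₂)
        houter_int (ae_of_all _ hcore)
    have h2 : (∫ x₁, B ^ (ℓ - 2) *
        D ((2 * εb) • x₁ + ((εa * εb) • y (ℓ₁ + ℓ₂ - 1) + y (ℓ₁ + ℓ₂ + ℓ₃ - 1))))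
        = B ^ (ℓ - 2) * ((2:ℝ)⁻¹ ^ n * ((∫ x, f x) * (∫ x, f x))) := by
      rw [integral_const_mul]
      congr 1
      rw [integral_comp_smul_add D (2 * εb)
        ((εa * εb) • y (ℓ₁ + ℓ₂ - 1) + y (ℓ₁ + ℓ₂ + ℓ₃ - 1)), habs, hID]
    exact h1.trans (le_of_eq h2)
  rw [hIf] at hmain
  have harith := final_arith hn hc hδ ℓ hℓ
  calc V ^ (-(2 * (ℓ:ℝ) * c)) * (∫ x₁, ∫ x₂, F x₁ x₂)
      ≤ V ^ (-(2 * (ℓ:ℝ) * c)) * (B ^ (ℓ - 2) *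
          ((2:ℝ)⁻¹ ^ n * ((V * R ^ ((n:ℝ) - 2 * c * n) / (2 * c - 1)) *
            (V * R ^ ((n:ℝ) - 2 * c * n) / (2 * c - 1))))) :=
        mul_le_mul_of_nonneg_left hmain (Real.rpow_nonneg hV.le _)
    _ = δ ^ ((2:ℝ) - 2 * c * ℓ) / (2 * c - 1) ^ 2 * (1 / 2 : ℝ) ^ n := harith
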